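/- arXiv:1508.07256 — 2 statements merged into one kernel-verified Lean document; each statement's English description precedes it below -/
import Mathlib

section
/- Suppose K is an infinite clique (complete graph on an infinite vertex set), and R is a directed graph with V(R) = V(K) in which every vertex has infinite outdegree. Then there exists a 1-shallow topological minor model β̃ of the countably infinite clique K_ω in K such that for each edge pq of K_ω, the path β̃(pq) is compatible with R: it is a path β̃(p)−x−y−β̃(q) of length three with (β̃(p), x) ∈ E(R) and (β̃(q), y) ∈ E(R). -/
namespace NWD

open SimpleGraph Filter

/-! ### Shallow minors -/

/-- A `d`-shallow minor model of `H` in `G`: a family of pairwise disjoint branch sets,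
each connected of radius at most `d` (witnessed by a center joined to every vertex of the
branch set by a walk of length at most `d` inside the branch set), such that every edge of `H`
is realized by an edge of `G` between the corresponding branch sets. -/
def IsShallowMinorModel {V W : Type} (G : SimpleGraph V) (H : SimpleGraph W) (d : ℕ)
    (α : W → G.Subgraph) : Prop :=
  (∀ w : W, ∃ c : (α w).verts, ∀ x : (α w).verts, ∃ p : (α w).coe.Walk c x, p.length ≤ d) ∧
  (∀ w w' : W, w ≠ w' → Disjoint (α w).verts (α w').verts) ∧
  (∀ w w' : W, H.Adj w w' → ∃ x ∈ (α w).verts, ∃ y ∈ (α w').verts, G.Adj x y)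

/-- `H` is a shallow minor of `G` at depth `d`. -/
def IsShallowMinor {V W : Type} (G : SimpleGraph V) (H : SimpleGraph W) (d : ℕ) : Prop :=
  ∃ α : W → G.Subgraph, IsShallowMinorModel G H d α

/-! ### Topological shallow minors -/

/-- A `d`-shallow topological minor model of `H` in `G`: an injective map `f` on vertices
together with, for every edge `uv` of `H`, a path of length at most `2d+1` in `G` from `f u`
to `f v`; the paths are pairwise vertex-disjoint apart from possibly sharing endpoints. -/
def IsTopMinorModel {V W : Type} (G : SimpleGraph V) (H : SimpleGraph W) (d : ℕ)
    (f : W → V) (P : ∀ ⦃u v : W⦄, H.Adj u v → G.Walk (f u) (f v)) : Prop :=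
  Function.Injective f ∧
  (∀ ⦃u v : W⦄ (h : H.Adj u v), (P h).IsPath) ∧
  (∀ ⦃u v : W⦄ (h : H.Adj u v), (P h).length ≤ 2 * d + 1) ∧
  (∀ ⦃u v : W⦄ (h : H.Adj u v), P h.symm = (P h).reverse) ∧
  (∀ ⦃u v u' v' : W⦄ (h : H.Adj u v) (h' : H.Adj u' v'), s(u, v) ≠ s(u', v') →
    ∀ x : V, x ∈ (P h).support → x ∈ (P h').support →
      (x = f u ∨ x = f v) ∧ (x = f u' ∨ x = f v'))

/-- `H` is a topological shallow minor of `G` at depth `d`. -/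
def IsTopShallowMinor {V W : Type} (G : SimpleGraph V) (H : SimpleGraph W) (d : ℕ) : Prop :=
  ∃ (f : W → V) (P : ∀ ⦃u v : W⦄, H.Adj u v → G.Walk (f u) (f v)),
    IsTopMinorModel G H d f P

/-! ### Ultraproducts of graphs -/

/-- The setoid identifying sequences agreeing on a set of the ultrafilter. -/
def prodSetoid (U : Ultrafilter ℕ) (Vs : ℕ → Type) : Setoid (∀ n, Vs n) where
  r g h := ∀ᶠ n in (U : Filter ℕ), g n = h n
  iseqv := by
    constructor
    · intro g; exact Eventually.of_forall fun n => rfl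
    · intro g h hg; exact hg.mono fun n hn => hn.symm
    · intro g h k h1 h2; filter_upwards [h1, h2] with n e1 e2; rw [e1, e2]

/-- The vertex set of the ultraproduct. -/
def UVertex (U : Ultrafilter ℕ) (Vs : ℕ → Type) : Type := Quotient (prodSetoid U Vs)

/-- The ultraproduct of a sequence of graphs along the ultrafilter `U`. -/
def UGraph (U : Ultrafilter ℕ) {Vs : ℕ → Type} (Gs : ∀ n, SimpleGraph (Vs n)) :
    SimpleGraph (UVertex U Vs) where
  Adj x y := Quotient.liftOn₂ x y
    (fun g h => ∀ᶠ n in (U : Filter ℕ), (Gs n).Adj (g n) (h n))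
    (by
      intro a b a' b' ha hb
      apply propext
      constructor
      · intro hadj; filter_upwards [hadj, ha, hb] with n h1 h2 h3; rw [← h2, ← h3]; exact h1
      · intro hadj; filter_upwards [hadj, ha, hb] with n h1 h2 h3; rw [h2, h3]; exact h1)
  symm := by
    refine ⟨?_⟩
    intro x y
    refine Quotient.inductionOn₂ x y ?_
    intro g h hadj
    exact hadj.mono fun n hn => hn.symm
  loopless := by
    refine ⟨?_⟩
    intro x
    refine Quotient.inductionOn x ?_
    intro g hadj
    obtain ⟨n, hn⟩ := hadj.exists
    exact (Gs n).irrefl hn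

/-! ### Graph classes and class limits -/

/-- A class of graphs: a predicate on graphs over arbitrary vertex types. -/
def GraphClass : Type 1 := ∀ V : Type, SimpleGraph V → Prop

/-- `C` is a class of finite graphs. -/
def FiniteClass (C : GraphClass) : Prop :=
  ∀ (V : Type) (G : SimpleGraph V), C V G → Finite V

/-- `H` is (isomorphic to) a subgraph of `G`. -/
def IsSubgraphOf {W V : Type} (H : SimpleGraph W) (G : SimpleGraph V) : Prop :=
  ∃ f : W → V, Function.Injective f ∧ ∀ ⦃u v : W⦄, H.Adj u v → G.Adj (f u) (f v)

/-- Membership in the class limit `C*`: subgraphs of ultraproducts of sequences from `C`. -/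
def InLimit (U : Ultrafilter ℕ) (C : GraphClass) {W : Type} (H : SimpleGraph W) : Prop :=
  ∃ (Vs : ℕ → Type) (Gs : ∀ n, SimpleGraph (Vs n)),
    (∀ n, C (Vs n) (Gs n)) ∧ IsSubgraphOf H (UGraph U Gs)

/-- `H ∈ C ▽ d`. -/
def InClassMinor (C : GraphClass) (d : ℕ) {W : Type} (H : SimpleGraph W) : Prop :=
  ∃ (V : Type) (G : SimpleGraph V), C V G ∧ IsShallowMinor G H d

/-- `H ∈ C ∇̃ d`. -/
def InClassTopMinor (C : GraphClass) (d : ℕ) {W : Type} (H : SimpleGraph W) : Prop :=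
  ∃ (V : Type) (G : SimpleGraph V), C V G ∧ IsTopShallowMinor G H d

/-- `H ∈ C* ▽ d`. -/
def InLimitMinor (U : Ultrafilter ℕ) (C : GraphClass) (d : ℕ) {W : Type}
    (H : SimpleGraph W) : Prop :=
  ∃ (V : Type) (G : SimpleGraph V), InLimit U C G ∧ IsShallowMinor G H d

/-- `H ∈ C* ∇̃ d`. -/
def InLimitTopMinor (U : Ultrafilter ℕ) (C : GraphClass) (d : ℕ) {W : Type}
    (H : SimpleGraph W) : Prop :=
  ∃ (V : Type) (G : SimpleGraph V), InLimit U C G ∧ IsTopShallowMinor G H d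

/-- `C` is somewhere dense: all finite graphs are shallow minors at some fixed depth. -/
def SomewhereDense (C : GraphClass) : Prop :=
  ∃ d : ℕ, ∀ (W : Type) (H : SimpleGraph W), Finite W → InClassMinor C d H

/-- `C` is topologically somewhere dense. -/
def TopSomewhereDense (C : GraphClass) : Prop :=
  ∃ d : ℕ, ∀ (W : Type) (H : SimpleGraph W), Finite W → InClassTopMinor C d H

/-- The countably infinite clique `K_ω`. -/
def Komega : SimpleGraph ℕ := ⊤

/-- The clique on continuum many vertices `K_𝔠`. -/
def Kcontinuum : SimpleGraph (Set ℕ) := ⊤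

/-- `C` is hereditary: closed under induced subgraphs. -/
def Hereditary (C : GraphClass) : Prop :=
  ∀ (V : Type) (G : SimpleGraph V), C V G →
    ∀ (W : Type) (f : W → V), Function.Injective f → C W (G.comap f)

/-! ### Scattered sets and quasi-wideness -/

/-- `X` is a `d`-scattered set of `G - S`: it avoids `S`, and any two distinct vertices of `X`
are at distance greater than `2d` in `G - S` (every connecting walk avoiding `S` is longer
than `2d`). -/
def ScatteredIn {V : Type} (G : SimpleGraph V) (d : ℕ) (S X : Set V) : Prop :=
  Disjoint X S ∧ ∀ u ∈ X, ∀ v ∈ X, u ≠ v →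
    ∀ p : G.Walk u v, (∀ x ∈ p.support, x ∉ S) → 2 * d < p.length

/-- `C` is quasi-wide with margin `s`. -/
def QuasiWide (C : GraphClass) (s : ℕ → ℕ) : Prop :=
  ∀ d m : ℕ, ∃ N : ℕ, ∀ (V : Type) (G : SimpleGraph V), C V G → N ≤ Nat.card V →
    ∃ S X : Set V, S.Finite ∧ S.ncard ≤ s d ∧ X.Finite ∧ X.ncard = m ∧ ScatteredIn G d S X

/-- `C` is uniformly quasi-wide with margin `s`. -/
def UniformlyQuasiWide (C : GraphClass) (s : ℕ → ℕ) : Prop :=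
  ∀ d m : ℕ, ∃ N : ℕ, ∀ (V : Type) (G : SimpleGraph V), C V G →
    ∀ W : Set V, N ≤ W.ncard →
      ∃ S X : Set V, S.Finite ∧ S.ncard ≤ s d ∧ X ⊆ W ∧ X.Finite ∧ X.ncard = m ∧
        ScatteredIn G d S X

/-- `C` is limit quasi-wide. -/
def LimitQW (U : Ultrafilter ℕ) (C : GraphClass) : Prop :=
  ∀ (d : ℕ) (V : Type) (G : SimpleGraph V), InLimit U C G → Infinite V →
    ∃ S X : Set V, S.Finite ∧ X.Infinite ∧ ScatteredIn G d S X

/-- `C` is uniformly limit quasi-wide. -/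
def UniformLimitQW (U : Ultrafilter ℕ) (C : GraphClass) : Prop :=
  ∀ (d : ℕ) (V : Type) (G : SimpleGraph V), InLimit U C G →
    ∀ W : Set V, W.Infinite →
      ∃ S X : Set V, S.Finite ∧ X ⊆ W ∧ X.Infinite ∧ ScatteredIn G d S X

/-- `C` is strongly limit quasi-wide with margin `s`. -/
def StrongLimitQW (U : Ultrafilter ℕ) (C : GraphClass) (s : ℕ → ℕ) : Prop :=
  ∀ (d : ℕ) (V : Type) (G : SimpleGraph V), InLimit U C G → Infinite V →
    ∃ S X : Set V, S.Finite ∧ S.ncard ≤ s d ∧ X.Infinite ∧ ScatteredIn G d S X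

/-- `C` is strongly uniformly limit quasi-wide with margin `s`. -/
def StrongUniformLimitQW (U : Ultrafilter ℕ) (C : GraphClass) (s : ℕ → ℕ) : Prop :=
  ∀ (d : ℕ) (V : Type) (G : SimpleGraph V), InLimit U C G →
    ∀ W : Set V, W.Infinite →
      ∃ S X : Set V, S.Finite ∧ S.ncard ≤ s d ∧ X ⊆ W ∧ X.Infinite ∧ ScatteredIn G d S X

/-! ### The splitter game -/

/-- One round of the splitter game: from arena `A`, connector picks `v`, splitter picks `W`;
the new arena consists of the vertices of `A` outside `W` at distance at most `d` from `v`
in the subgraph induced by `A`. -/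
def arenaStep {V : Type} (G : SimpleGraph V) (d : ℕ) (A : Set V) (v : V) (W : Set V) : Set V :=
  {x | x ∈ A ∧ x ∉ W ∧ ∃ p : G.Walk v x, p.length ≤ d ∧ ∀ y ∈ p.support, y ∈ A}

/-- The arena after a (chronological) history of moves. -/
def arenaAfter {V : Type} (G : SimpleGraph V) (d : ℕ) (hist : List (V × Set V)) : Set V :=
  hist.foldl (fun A mv => arenaStep G d A mv.1 mv.2) Set.univ

/-- A strategy for splitter: given the history and connector's new move, produce a set. -/
def SplitterStrategy (V : Type) : Type := List (V × Set V) → V → Set V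

/-- The history of the play where connector plays `c` and splitter follows `σ`. -/
def splitterHist {V : Type} (σ : SplitterStrategy V) (c : ℕ → V) : ℕ → List (V × Set V)
  | 0 => []
  | n + 1 => splitterHist σ c n ++ [(c n, σ (splitterHist σ c n) (c n))]

/-- Connector's first `n` moves are valid (inside the successive arenas). -/
def ConsistentPlay {V : Type} (G : SimpleGraph V) (d : ℕ) (σ : SplitterStrategy V)
    (c : ℕ → V) (n : ℕ) : Prop :=
  ∀ k < n, c k ∈ arenaAfter G d (splitterHist σ c k)

/-- `σ` is a winning strategy for splitter in the limit `d`-splitter game on `G`: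
its moves are valid (finite subsets of the arena) along any consistent play, and no
infinite sequence of valid connector moves exists. -/
def SplitterWinsLimit {V : Type} (G : SimpleGraph V) (d : ℕ) (σ : SplitterStrategy V) : Prop :=
  (∀ (c : ℕ → V) (n : ℕ), ConsistentPlay G d σ c (n + 1) →
      (σ (splitterHist σ c n) (c n)).Finite ∧
      σ (splitterHist σ c n) (c n) ⊆ arenaAfter G d (splitterHist σ c n)) ∧
  (∀ c : ℕ → V, ∃ n : ℕ, c n ∉ arenaAfter G d (splitterHist σ c n))

/-- `σ` is a winning strategy for splitter in the `(ℓ, m, d)`-splitter game on `G`. -/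
def SplitterWinsGame {V : Type} (G : SimpleGraph V) (l m d : ℕ) (σ : SplitterStrategy V) :
    Prop :=
  (∀ (c : ℕ → V) (n : ℕ), ConsistentPlay G d σ c (n + 1) →
      (σ (splitterHist σ c n) (c n)).Finite ∧
      (σ (splitterHist σ c n) (c n)).ncard ≤ m ∧
      σ (splitterHist σ c n) (c n) ⊆ arenaAfter G d (splitterHist σ c n)) ∧
  (∀ c : ℕ → V, ∃ n ≤ l, c n ∉ arenaAfter G d (splitterHist σ c n))

/-- A strategy for connector: given the history, produce a vertex. -/
def ConnectorStrategy (V : Type) : Type := List (V × Set V) → V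

/-- The history of the play where connector follows `τ` and splitter plays `w`. -/
def connectorHist {V : Type} (τ : ConnectorStrategy V) (w : ℕ → Set V) :
    ℕ → List (V × Set V)
  | 0 => []
  | n + 1 => connectorHist τ w n ++ [(τ (connectorHist τ w n), w n)]

/-- `τ` is a winning strategy for connector in the limit `d`-splitter game on `G`:
as long as splitter's moves are valid, connector's moves stay in the arena forever. -/
def ConnectorWinsLimit {V : Type} (G : SimpleGraph V) (d : ℕ) (τ : ConnectorStrategy V) :
    Prop :=
  ∀ (w : ℕ → Set V) (n : ℕ),
    (∀ k < n, (w k).Finite ∧ w k ⊆ arenaAfter G d (connectorHist τ w k)) →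
    τ (connectorHist τ w n) ∈ arenaAfter G d (connectorHist τ w n)

/-- `τ` is a winning strategy for connector in the `(ℓ, m, d)`-splitter game on `G`:
the arena stays nonempty for `ℓ` rounds, i.e. connector has valid moves at rounds `0,…,ℓ`. -/
def ConnectorWinsGame {V : Type} (G : SimpleGraph V) (l m d : ℕ) (τ : ConnectorStrategy V) :
    Prop :=
  ∀ (w : ℕ → Set V) (n : ℕ), n ≤ l →
    (∀ k < n, (w k).Finite ∧ (w k).ncard ≤ m ∧
      w k ⊆ arenaAfter G d (connectorHist τ w k)) →
    τ (connectorHist τ w n) ∈ arenaAfter G d (connectorHist τ w n)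

/-- `C` is winning for splitter. -/
def WinningForSplitter (C : GraphClass) : Prop :=
  ∀ d : ℕ, ∃ l m : ℕ, ∀ (V : Type) (G : SimpleGraph V), C V G →
    ∃ σ : SplitterStrategy V, SplitterWinsGame G l m d σ

/-- `C` is limit winning for splitter. -/
def LimitWinningForSplitter (U : Ultrafilter ℕ) (C : GraphClass) : Prop :=
  ∀ (d : ℕ) (V : Type) (G : SimpleGraph V), InLimit U C G →
    ∃ σ : SplitterStrategy V, SplitterWinsLimit G d σ

/-! ### First-order satisfaction in graphs -/

/-- `G` satisfies the first-order sentence `φ` in the language of graphs. -/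
def GSat {V : Type} (G : SimpleGraph V) (φ : FirstOrder.Language.graph.Sentence) : Prop :=
  @FirstOrder.Language.Sentence.Realize FirstOrder.Language.graph V G.structure φ


/-! ### Greedy construction for Statement 7 -/

section Greedy

variable {A : Type} [Infinite A] (R : A → A → Prop)

/-- Target set for the `i`-th greedy choice, given the list of previous choices.
Indices are laid out so that index `n*n` is the branch vertex `f n`, and for `k < n`,
indices `n*n + 2*k+1` and `n*n + 2*k+2` are the two internal vertices of the path
for the pair `(k, n)`. -/
noncomputable def tgt (l : List A) (i : ℕ) : Set A :=
  if i - Nat.sqrt i * Nat.sqrt i = 0 then Set.univ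
  else if (i - Nat.sqrt i * Nat.sqrt i) % 2 = 1 then
    {b | R (l.getD (((i - Nat.sqrt i * Nat.sqrt i - 1) / 2) *
      ((i - Nat.sqrt i * Nat.sqrt i - 1) / 2)) (Classical.arbitrary A)) b}
  else {b | R (l.getD (Nat.sqrt i * Nat.sqrt i) (Classical.arbitrary A)) b}

lemma tgt_infinite (hout : ∀ a : A, {b : A | R a b}.Infinite) (l : List A) (i : ℕ) :
    (tgt R l i).Infinite := by
  unfold tgt
  split_ifs
  · exact Set.infinite_univ
  · exact hout _
  · exact hout _

variable (hout : ∀ a : A, {b : A | R a b}.Infinite)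

/-- The `i`-th greedy choice, avoiding the list `l` of previous choices. -/
noncomputable def pick (l : List A) (i : ℕ) : A :=
  (((tgt_infinite R hout l i).diff l.finite_toSet).nonempty).some

lemma pick_mem_tgt (l : List A) (i : ℕ) : pick R hout l i ∈ tgt R l i :=
  ((((tgt_infinite R hout l i).diff l.finite_toSet).nonempty).some_mem).1

lemma pick_not_mem (l : List A) (i : ℕ) : pick R hout l i ∉ l :=
  ((((tgt_infinite R hout l i).diff l.finite_toSet).nonempty).some_mem).2

/-- The list of the first `i` greedy choices. -/
noncomputable def pref : ℕ → List A
  | 0 => []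
  | i + 1 => pref i ++ [pick R hout (pref i) i]

/-- The sequence of greedy choices. -/
noncomputable def gseq (i : ℕ) : A := pick R hout (pref R hout i) i

lemma pref_length (i : ℕ) : (pref R hout i).length = i := by
  induction i with
  | zero => rfl
  | succ i ih => simp [pref, ih]

lemma pref_getD {m i : ℕ} (h : m < i) :
    (pref R hout i).getD m (Classical.arbitrary A) = gseq R hout m := by
  induction i with
  | zero => omega
  | succ i ih =>
    rw [pref]
    rcases Nat.lt_succ_iff_lt_or_eq.mp h with h' | h'
    · rw [List.getD_append _ _ _ _ (by rw [pref_length]; exact h')]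
      exact ih h'
    · subst h'
      rw [List.getD_append_right _ _ _ _ (by rw [pref_length]),
        pref_length]
      simp [gseq]

lemma gseq_mem_pref {m i : ℕ} (h : m < i) : gseq R hout m ∈ pref R hout i := by
  induction i with
  | zero => omega
  | succ i ih =>
    rw [pref]
    rcases Nat.lt_succ_iff_lt_or_eq.mp h with h' | h'
    · exact List.mem_append_left _ (ih h')
    · subst h'
      exact List.mem_append_right _ (by simp [gseq])

lemma gseq_injective : Function.Injective (gseq R hout) := by
  have key : ∀ m i : ℕ, m < i → gseq R hout i ≠ gseq R hout m := by
    intro m i him he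
    have h2 := gseq_mem_pref R hout him
    rw [← he] at h2
    exact pick_not_mem R hout (pref R hout i) i h2
  intro a b hab
  rcases lt_trichotomy a b with h | h | h
  · exact absurd hab.symm (key a b h)
  · exact h
  · exact absurd hab (key b a h)

lemma gseq_ne {i j : ℕ} (h : i ≠ j) : gseq R hout i ≠ gseq R hout j :=
  fun he => h (gseq_injective R hout he)

lemma sqrt_offset {n j : ℕ} (h1 : 1 ≤ j) (h2 : j ≤ 2 * n) : Nat.sqrt (n * n + j) = n := by
  have hle : n ≤ Nat.sqrt (n * n + j) := Nat.le_sqrt.mpr (by omega)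
  have hlt : Nat.sqrt (n * n + j) < n + 1 := by
    rw [Nat.sqrt_lt']
    nlinarith
  omega

lemma gseq_rel_X {k n : ℕ} (h : k < n) :
    R (gseq R hout (k * k)) (gseq R hout (n * n + (2 * k + 1))) := by
  have hm := pick_mem_tgt R hout (pref R hout (n * n + (2 * k + 1))) (n * n + (2 * k + 1))
  rw [tgt, sqrt_offset (by omega) (by omega)] at hm
  rw [if_neg (by omega), if_pos (by omega)] at hm
  have he : (n * n + (2 * k + 1) - n * n - 1) / 2 = k := by omega
  rw [he, pref_getD R hout (by nlinarith)] at hm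
  exact hm

lemma gseq_rel_Y {k n : ℕ} (h : k < n) :
    R (gseq R hout (n * n)) (gseq R hout (n * n + (2 * k + 2))) := by
  have hm := pick_mem_tgt R hout (pref R hout (n * n + (2 * k + 2))) (n * n + (2 * k + 2))
  rw [tgt, sqrt_offset (by omega) (by omega)] at hm
  rw [if_neg (by omega), if_neg (by omega)] at hm
  rw [pref_getD R hout (by omega)] at hm
  exact hm

/-- Index arithmetic: an internal index is never a square. -/
lemma idx_internal_ne_sq {m M w c : ℕ} (h : m < M) (hc1 : 1 ≤ c) (hc2 : c ≤ 2) :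
    M * M + (2 * m + c) ≠ w * w := by
  rcases le_or_gt w M with hw | hw
  · have := Nat.mul_self_le_mul_self hw
    omega
  · have h1 : M + 1 ≤ w := hw
    have := Nat.mul_self_le_mul_self h1
    nlinarith

/-- Index arithmetic: the internal indices determine the pair and the side. -/
lemma idx_internal_inj {m M m' M' c c' : ℕ} (h : m < M) (h' : m' < M')
    (hc1 : 1 ≤ c) (hc2 : c ≤ 2) (hc1' : 1 ≤ c') (hc2' : c' ≤ 2)
    (he : M * M + (2 * m + c) = M' * M' + (2 * m' + c')) :
    M = M' ∧ m = m' ∧ c = c' := by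
  have hMM : M = M' := by
    rcases lt_trichotomy M M' with hlt | heq | hlt
    · have h1 : M + 1 ≤ M' := hlt
      have := Nat.mul_self_le_mul_self h1
      nlinarith
    · exact heq
    · have h1 : M' + 1 ≤ M := hlt
      have := Nat.mul_self_le_mul_self h1
      nlinarith
  subst hMM
  omega

attribute [irreducible] gseq pick pref

/-- The branch vertex for `n`. -/
noncomputable def gf (n : ℕ) : A := gseq R hout (n * n)

/-- The first internal vertex for a pair `(k, n)` with `k < n` (an out-neighbour of `gf k`). -/
noncomputable def gX (k n : ℕ) : A := gseq R hout (n * n + (2 * k + 1))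

/-- The second internal vertex for a pair `(k, n)` with `k < n` (an out-neighbour of `gf n`). -/
noncomputable def gY (k n : ℕ) : A := gseq R hout (n * n + (2 * k + 2))

lemma gf_injective : Function.Injective (gf R hout) := by
  intro a b hab
  have := gseq_injective R hout hab
  nlinarith

lemma sq_lt_sq' {p q : ℕ} (h : p < q) : p * p < q * q := Nat.mul_self_lt_mul_self h

lemma gf_ne_gX {w m M : ℕ} (h : m < M) : gf R hout w ≠ gX R hout m M :=
  gseq_ne R hout fun he => idx_internal_ne_sq h (c := 1) (by omega) (by omega) he.symm

lemma gf_ne_gY {w m M : ℕ} (h : m < M) : gf R hout w ≠ gY R hout m M :=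
  gseq_ne R hout fun he => idx_internal_ne_sq h (c := 2) (by omega) (by omega) he.symm

lemma gX_ne_gY {m M : ℕ} : gX R hout m M ≠ gY R hout m M :=
  gseq_ne R hout (by omega)

/-- The forward path `gf p − gX p q − gY p q − gf q` for `p < q`. -/
noncomputable def fpath (p q : ℕ) (h : p < q) :
    (⊤ : SimpleGraph A).Walk (gf R hout p) (gf R hout q) :=
  Walk.cons ((SimpleGraph.top_adj _ _).mpr (gf_ne_gX R hout h))
    (Walk.cons ((SimpleGraph.top_adj _ _).mpr (gX_ne_gY R hout))
      (Walk.cons ((SimpleGraph.top_adj _ _).mpr (gf_ne_gY R hout h).symm) Walk.nil))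

/-- The realizing path for an arbitrary pair `p ≠ q`. -/
noncomputable def pw (p q : ℕ) (h : p ≠ q) :
    (⊤ : SimpleGraph A).Walk (gf R hout p) (gf R hout q) :=
  if hlt : p < q then fpath R hout p q hlt
  else (fpath R hout q p (by omega)).reverse

lemma fpath_support {p q : ℕ} (h : p < q) :
    (fpath R hout p q h).support = [gf R hout p, gX R hout p q, gY R hout p q, gf R hout q] := by
  simp [fpath]

lemma pw_support_lt {p q : ℕ} (h : p < q) :
    (pw R hout p q h.ne).support = [gf R hout p, gX R hout p q, gY R hout p q, gf R hout q] := by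
  rw [pw, dif_pos h, fpath_support]

lemma pw_support_gt {p q : ℕ} (h : q < p) :
    (pw R hout p q h.ne').support =
      [gf R hout p, gY R hout q p, gX R hout q p, gf R hout q] := by
  rw [pw, dif_neg (by omega), SimpleGraph.Walk.support_reverse, fpath_support]
  rfl

lemma pw_support_eq {p q : ℕ} (h : p ≠ q) (h' : p ≠ q) :
    (pw R hout p q h).support = (pw R hout p q h').support := rfl

lemma pw_mem_support {p q : ℕ} (h : p ≠ q) {x : A} (hx : x ∈ (pw R hout p q h).support) :
    x = gf R hout p ∨ x = gf R hout q ∨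
      x = gX R hout (min p q) (max p q) ∨ x = gY R hout (min p q) (max p q) := by
  rcases lt_or_gt_of_ne h with hlt | hlt
  · rw [pw_support_eq R hout h hlt.ne, pw_support_lt R hout hlt] at hx
    have hmin : min p q = p := by omega
    have hmax : max p q = q := by omega
    rw [hmin, hmax]
    simp only [List.mem_cons, List.not_mem_nil, or_false] at hx
    tauto
  · rw [pw_support_eq R hout h hlt.ne', pw_support_gt R hout hlt] at hx
    have hmin : min p q = q := by omega
    have hmax : max p q = p := by omega
    rw [hmin, hmax]
    simp only [List.mem_cons, List.not_mem_nil, or_false] at hx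
    tauto

lemma pw_length {p q : ℕ} (h : p ≠ q) : (pw R hout p q h).length = 3 := by
  rw [pw]
  split_ifs
  · simp [fpath]
  · rw [SimpleGraph.Walk.length_reverse]; simp [fpath]

lemma fpath_isPath {p q : ℕ} (h : p < q) : (fpath R hout p q h).IsPath := by
  rw [SimpleGraph.Walk.isPath_def, fpath_support R hout h]
  have h1 := gf_ne_gX R hout (w := p) h
  have h2 := gf_ne_gY R hout (w := p) h
  have h3 : gf R hout p ≠ gf R hout q := fun he => absurd (gf_injective R hout he) h.ne
  have h4 : gX R hout p q ≠ gY R hout p q := gX_ne_gY R hout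
  have h5 : gX R hout p q ≠ gf R hout q := (gf_ne_gX R hout (w := q) h).symm
  have h6 : gY R hout p q ≠ gf R hout q := (gf_ne_gY R hout (w := q) h).symm
  simp only [List.nodup_cons, List.mem_cons, List.not_mem_nil, or_false, not_or,
    List.nodup_nil, and_true]
  exact ⟨⟨h1, h2, h3⟩, ⟨h4, h5⟩, h6, fun hf => hf⟩

lemma pw_isPath {p q : ℕ} (h : p ≠ q) : (pw R hout p q h).IsPath := by
  rw [pw]
  split_ifs with hlt
  · exact fpath_isPath R hout hlt
  · exact (fpath_isPath R hout (by omega)).reverse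

lemma pw_symm {p q : ℕ} (h : p ≠ q) :
    pw R hout q p h.symm = (pw R hout p q h).reverse := by
  rcases lt_or_gt_of_ne h with hlt | hlt
  · rw [pw, pw, dif_pos hlt, dif_neg (by omega)]
  · rw [pw, pw, dif_pos hlt, dif_neg (by omega), SimpleGraph.Walk.reverse_reverse]

end Greedy

/-- If `K` is an infinite clique and `R` is a directed graph on the same
vertex set in which every vertex has infinite outdegree, then there is a `1`-shallow
topological minor model of `K_ω` in `K` all of whose paths are compatible with `R`: each
path has the form `f p − x − y − f q` with `(f p, x) ∈ E(R)` and `(f q, y) ∈ E(R)`. -/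
theorem greedy_model (A : Type) [Infinite A] (R : A → A → Prop)
    (hout : ∀ a : A, {b : A | R a b}.Infinite) :
    ∃ (f : ℕ → A) (P : ∀ ⦃p q : ℕ⦄, Komega.Adj p q →
        (⊤ : SimpleGraph A).Walk (f p) (f q)),
      IsTopMinorModel (⊤ : SimpleGraph A) Komega 1 f P ∧
      ∀ ⦃p q : ℕ⦄ (h : Komega.Adj p q),
        ∃ x y : A, R (f p) x ∧ R (f q) y ∧ (P h).support = [f p, x, y, f q] := by
  classical
  refine ⟨gf R hout, fun p q h => pw R hout p q h.ne, ⟨gf_injective R hout, ?_, ?_, ?_, ?_⟩, ?_⟩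
  · intro u v h
    exact pw_isPath R hout h.ne
  · intro u v h
    rw [pw_length R hout h.ne]
  · intro u v h
    exact pw_symm R hout h.ne
  · intro u v u' v' h h' hne x hx hx'
    have huv : u ≠ v := h.ne
    have huv' : u' ≠ v' := h'.ne
    have hpair : (min u v, max u v) ≠ (min u' v', max u' v') := by
      intro hcon
      apply hne
      have h1 : min u v = min u' v' := congrArg Prod.fst hcon
      have h2 : max u v = max u' v' := congrArg Prod.snd hcon
      have : (u = u' ∧ v = v') ∨ (u = v' ∧ v = u') := by omega
      rcases this with ⟨ha, hb⟩ | ⟨ha, hb⟩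
      · rw [ha, hb]
      · rw [ha, hb, Sym2.eq_swap]
    have hmm : min u v < max u v := by omega
    have hmm' : min u' v' < max u' v' := by omega
    have c1 := pw_mem_support R hout h.ne hx
    have c2 := pw_mem_support R hout h'.ne hx'
    have notint : ¬(x = gX R hout (min u v) (max u v) ∨ x = gY R hout (min u v) (max u v)) := by
      rintro (rfl | rfl) <;>
      · rcases c2 with hc | hc | hc | hc
        · exact absurd hc.symm (by first
            | exact gf_ne_gX R hout hmm
            | exact gf_ne_gY R hout hmm)
        · exact absurd hc.symm (by first
            | exact gf_ne_gX R hout hmm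
            | exact gf_ne_gY R hout hmm)
        · refine absurd hc (gseq_ne R hout fun he => ?_)
          have := idx_internal_inj hmm hmm' (by omega) (by omega) (by omega) (by omega) he
          exact hpair (by simp only [Prod.mk.injEq]; omega)
        · refine absurd hc (gseq_ne R hout fun he => ?_)
          have := idx_internal_inj hmm hmm' (by omega) (by omega) (by omega) (by omega) he
          exact hpair (by simp only [Prod.mk.injEq]; omega)
    have notint' : ¬(x = gX R hout (min u' v') (max u' v') ∨
        x = gY R hout (min u' v') (max u' v')) := by
      rintro (rfl | rfl) <;>
      · rcases c1 with hc | hc | hc | hc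
        · exact absurd hc.symm (by first
            | exact gf_ne_gX R hout hmm'
            | exact gf_ne_gY R hout hmm')
        · exact absurd hc.symm (by first
            | exact gf_ne_gX R hout hmm'
            | exact gf_ne_gY R hout hmm')
        · refine absurd hc (gseq_ne R hout fun he => ?_)
          have := idx_internal_inj hmm' hmm (by omega) (by omega) (by omega) (by omega) he
          exact hpair (by simp only [Prod.mk.injEq]; omega)
        · refine absurd hc (gseq_ne R hout fun he => ?_)
          have := idx_internal_inj hmm' hmm (by omega) (by omega) (by omega) (by omega) he
          exact hpair (by simp only [Prod.mk.injEq]; omega)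
    constructor
    · tauto
    · tauto
  · intro p q h
    rcases lt_or_gt_of_ne h.ne with hlt | hlt
    · refine ⟨gX R hout p q, gY R hout p q, gseq_rel_X R hout hlt, gseq_rel_Y R hout hlt, ?_⟩
      rw [pw_support_eq R hout h.ne hlt.ne, pw_support_lt R hout hlt]
    · refine ⟨gY R hout q p, gX R hout q p, gseq_rel_Y R hout hlt, gseq_rel_X R hout hlt, ?_⟩
      rw [pw_support_eq R hout h.ne hlt.ne', pw_support_gt R hout hlt]

end NWD
end

section
/- Let d ∈ ℕ and let G be a graph. If some infinite clique is a shallow minor of G at depth d, then the countably infinite clique K_ω is a topological shallow minor of G at depth 3d+1. -/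
namespace NWD

open SimpleGraph Filter

/-! ### Auxiliary machinery -/

section Helpers

variable {V : Type}


lemma exists_infinite_fiber' {β : Type} {M : Set ℕ} (hM : M.Infinite) (g : ℕ → β)
    {Y : Set β} (hY : Y.Finite) (hg : ∀ k ∈ M, g k ∈ Y) :
    ∃ b, {k ∈ M | g k = b}.Infinite := by
  by_contra hcon
  push_neg at hcon
  have hsub : M ⊆ ⋃ b ∈ Y, {k ∈ M | g k = b} := by
    intro k hk; exact Set.mem_biUnion (hg k hk) ⟨hk, rfl⟩
  exact hM ((hY.biUnion (fun b _ => hcon b)).subset hsub)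

lemma sunflower [DecidableEq V] : ∀ (n : ℕ) (M : Set ℕ), M.Infinite → ∀ (f : ℕ → Finset V),
    (∀ k ∈ M, (f k).card ≤ n) →
    ∃ (Y : Finset V) (M' : Set ℕ), M' ⊆ M ∧ M'.Infinite ∧ (∀ k ∈ M', Y ⊆ f k) ∧
      (∀ k ∈ M', ∀ k' ∈ M', k ≠ k' → f k ∩ f k' = Y) := by
  classical
  intro n
  induction n with
  | zero =>
    intro M hM f hf
    refine ⟨∅, M, le_refl _, hM, fun k _ => Finset.empty_subset _, ?_⟩
    intro k hk k' hk' hne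
    have h1 : f k = ∅ := Finset.card_eq_zero.1 (Nat.le_zero.1 (hf k hk))
    simp [h1]
  | succ n ih =>
    intro M hM f hf
    by_cases hx : ∃ x : V, {k ∈ M | x ∈ f k}.Infinite
    · obtain ⟨x, hxinf⟩ := hx
      have hsub1 : {k ∈ M | x ∈ f k} ⊆ M := fun k hk => hk.1
      obtain ⟨Y', M', hM'sub, hM'inf, hY'sub, hpair⟩ :=
        ih {k ∈ M | x ∈ f k} hxinf (fun k => (f k).erase x)
          (fun k hk => by
            show ((f k).erase x).card ≤ n
            have := hf k hk.1
            have h2 := Finset.card_erase_of_mem hk.2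
            omega)
      refine ⟨insert x Y', M', fun k hk => (hM'sub hk).1, hM'inf, ?_, ?_⟩
      · intro k hk
        have hxk : x ∈ f k := (hM'sub hk).2
        intro y hy
        rcases Finset.mem_insert.1 hy with rfl | hy
        · exact hxk
        · exact Finset.erase_subset _ _ (hY'sub k hk hy)
      · intro k hk k' hk' hne
        have hxx := hpair k hk k' hk' hne
        have hxk : x ∈ f k := (hM'sub hk).2
        have hxk' : x ∈ f k' := (hM'sub hk').2
        ext y
        by_cases hyx : y = x
        · subst hyx
          simp [hxk, hxk']
        · constructor
          · intro hy
            have : y ∈ (f k).erase x ∩ (f k').erase x := by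
              simp only [Finset.mem_inter, Finset.mem_erase] at hy ⊢
              exact ⟨⟨hyx, hy.1⟩, ⟨hyx, hy.2⟩⟩
            rw [hxx] at this
            exact Finset.mem_insert_of_mem this
          · intro hy
            rcases Finset.mem_insert.1 hy with rfl | hy
            · exact absurd rfl hyx
            · have : y ∈ (f k).erase x ∩ (f k').erase x := by rw [hxx]; exact hy
              simp only [Finset.mem_inter, Finset.mem_erase] at this
              exact Finset.mem_inter.2 ⟨this.1.2, this.2.2⟩
    · push_neg at hx
      have key : ∀ (p : ℕ) (U : Finset V), {k ∈ M | p < k ∧ ∀ x ∈ U, x ∉ f k}.Infinite := by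
        intro p U
        have hfin : ({k : ℕ | k ≤ p} ∪ ⋃ x ∈ U, {k ∈ M | x ∈ f k}).Finite :=
          (Set.finite_le_nat p).union (U.finite_toSet.biUnion (fun x _ => hx x))
        refine (hM.diff hfin).mono ?_
        intro k hk
        refine ⟨hk.1, ?_, ?_⟩
        · have := hk.2
          simp only [Set.mem_union, Set.mem_setOf_eq, not_or] at this
          omega
        · intro x hxU hxfk
          exact hk.2 (Or.inr (Set.mem_biUnion hxU ⟨hk.1, hxfk⟩))
      let T : ℕ × Finset V → Set ℕ := fun s => {k ∈ M | s.1 < k ∧ ∀ x ∈ s.2, x ∉ f k}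
      let next : ℕ × Finset V → ℕ × Finset V := fun s => (sInf (T s), s.2 ∪ f (sInf (T s)))
      let a : ℕ → ℕ × Finset V := fun n => next^[n+1] (0, ∅)
      have hstep : ∀ n, a (n+1) = next (a n) := by
        intro n
        show next^[n+2] (0, ∅) = next (next^[n+1] (0, ∅))
        rw [Function.iterate_succ_apply']
      have hmem0 : ∀ s : ℕ × Finset V, sInf (T s) ∈ T s := by
        intro s
        exact Nat.sInf_mem (key s.1 s.2).nonempty
      have hmemA : ∀ n, (a n).1 ∈ T (next^[n] (0, ∅)) := by
        intro n
        have : a n = next (next^[n] (0,∅)) := by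
          show next^[n+1] (0, ∅) = _
          rw [Function.iterate_succ_apply']
        rw [this]
        exact hmem0 _

      have hM1 : ∀ n, (a n).1 ∈ M := fun n => (hmemA n).1
      have hsnd : ∀ n, (a (n+1)).2 = (a n).2 ∪ f ((a (n+1)).1) := by
        intro n; rw [hstep n]
      have hlt : ∀ n, (a n).1 < (a (n+1)).1 := by
        intro n
        have h1 := hmem0 (a n)
        have : (a (n+1)).1 = sInf (T (a n)) := by rw [hstep n]
        rw [this]
        exact h1.2.1
      have hdisj2 : ∀ n, ∀ x ∈ (a n).2, x ∉ f ((a (n+1)).1) := by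
        intro n
        have h1 := hmem0 (a n)
        have heq : (a (n+1)).1 = sInf (T (a n)) := by rw [hstep n]
        rw [heq]
        exact h1.2.2
      have hsub2 : ∀ n, f ((a n).1) ⊆ (a n).2 := by
        intro n
        match n with
        | 0 =>
          show f ((next (0,∅)).1) ⊆ (next (0,∅)).2
          exact Finset.subset_union_right
        | n+1 =>
          rw [hsnd n]
          exact Finset.subset_union_right
      have hmono2 : ∀ m n, m ≤ n → (a m).2 ⊆ (a n).2 := by
        intro m n hmn
        induction n with
        | zero => have : m = 0 := Nat.le_zero.1 hmn; subst this; exact subset_refl _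
        | succ n ihn =>
          rcases Nat.lt_or_ge m (n+1) with hc | hc
          · refine subset_trans (ihn (by omega)) ?_
            rw [hsnd n]; exact Finset.subset_union_left
          · have : m = n+1 := by omega
            subst this; exact subset_refl _
      have hstrict : StrictMono (fun n => (a n).1) := strictMono_nat_of_lt_succ hlt
      have hdisjoint : ∀ m n, m < n → f ((a m).1) ∩ f ((a n).1) = ∅ := by
        intro m n hmn
        obtain ⟨n', rfl⟩ : ∃ n', n = n' + 1 := ⟨n - 1, by omega⟩
        rw [Finset.eq_empty_iff_forall_notMem]
        intro y hy
        rw [Finset.mem_inter] at hy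
        exact hdisj2 n' y (hmono2 m n' (by omega) (hsub2 m hy.1)) hy.2
      refine ⟨∅, Set.range (fun n => (a n).1), ?_, ?_, fun k _ => Finset.empty_subset _, ?_⟩
      · rintro k ⟨n, rfl⟩; exact hM1 n
      · exact Set.infinite_range_of_injective hstrict.injective
      · rintro k ⟨m, rfl⟩ k' ⟨n, rfl⟩ hne
        have hmn : m ≠ n := fun hh => hne (by rw [hh])
        rcases Nat.lt_or_ge m n with hc | hc
        · exact hdisjoint m n hc
        · rw [Finset.inter_comm]
          exact hdisjoint n m (by omega)


open Classical in
noncomputable def lastIn {G : SimpleGraph V} (Y : Set V) :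
    ∀ {a b : V}, G.Walk a b → Σ' u, G.Walk u b
  | a, _, Walk.nil => ⟨a, Walk.nil⟩
  | a, _, Walk.cons h p => if ∃ y ∈ Y, y ∈ p.support then lastIn Y p else ⟨a, Walk.cons h p⟩

lemma lastIn_support_subset {G : SimpleGraph V} (Y : Set V) {a b : V} (p : G.Walk a b) :
    ∀ x ∈ (lastIn Y p).2.support, x ∈ p.support := by
  induction p with
  | nil => simp [lastIn]
  | cons h p ih =>
    intro x hx
    rw [lastIn] at hx
    by_cases hc : ∃ y ∈ Y, y ∈ p.support
    · rw [if_pos hc] at hx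
      exact List.mem_cons_of_mem _ (ih x hx)
    · rw [if_neg hc] at hx
      exact hx

lemma lastIn_length_le {G : SimpleGraph V} (Y : Set V) {a b : V} (p : G.Walk a b) :
    (lastIn Y p).2.length ≤ p.length := by
  induction p with
  | nil => simp [lastIn]
  | cons h p ih =>
    rw [lastIn]
    by_cases hc : ∃ y ∈ Y, y ∈ p.support
    · rw [if_pos hc]
      exact le_trans ih (by simp)
    · rw [if_neg hc]

lemma lastIn_isPath {G : SimpleGraph V} (Y : Set V) {a b : V} (p : G.Walk a b)
    (hp : p.IsPath) : (lastIn Y p).2.IsPath := by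
  induction p with
  | nil => simp [lastIn]
  | cons h p ih =>
    rw [lastIn]
    by_cases hc : ∃ y ∈ Y, y ∈ p.support
    · rw [if_pos hc]
      exact ih hp.of_cons
    · rw [if_neg hc]
      exact hp

lemma lastIn_eq_of_mem {G : SimpleGraph V} (Y : Set V) {a b : V} (p : G.Walk a b) :
    ∀ y ∈ (lastIn Y p).2.support, y ∈ Y → y = (lastIn Y p).1 := by
  induction p with
  | nil => intro y hy _; simpa [lastIn] using hy
  | cons h p ih =>
    intro y hy hyY
    rw [lastIn] at hy ⊢
    by_cases hc : ∃ y ∈ Y, y ∈ p.support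
    · rw [if_pos hc] at hy ⊢
      exact ih y hy hyY
    · rw [if_neg hc] at hy ⊢
      rw [Walk.support_cons] at hy
      rcases List.mem_cons.1 hy with hy | hy
      · exact hy
      · exact absurd ⟨y, hyY, hy⟩ hc

lemma lastIn_fst_mem {G : SimpleGraph V} (Y : Set V) {a b : V} (p : G.Walk a b)
    (hex : ∃ y ∈ Y, y ∈ p.support) : (lastIn Y p).1 ∈ Y := by
  induction p with
  | nil =>
    obtain ⟨y, hyY, hy⟩ := hex
    simp only [Walk.support_nil, List.mem_singleton] at hy
    subst hy
    simpa [lastIn] using hyY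
  | cons h p ih =>
    rw [lastIn]
    by_cases hc : ∃ y ∈ Y, y ∈ p.support
    · rw [if_pos hc]
      exact ih hc
    · rw [if_neg hc]
      obtain ⟨y, hyY, hy⟩ := hex
      rw [Walk.support_cons] at hy
      rcases List.mem_cons.1 hy with hy | hy
      · subst hy; exact hyY
      · exact absurd ⟨y, hyY, hy⟩ hc


lemma fan {G : SimpleGraph V} {d : ℕ} {S : Set V} {c : V} {x : ℕ → V}
    (q : ∀ k : ℕ, G.Walk c (x k))
    (hlen : ∀ k, (q k).length ≤ d) (hsupp : ∀ k, ∀ y ∈ (q k).support, y ∈ S) :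
    ∃ (u : V) (M : Set ℕ) (t : ∀ k ∈ M, G.Walk u (x k)),
      M.Infinite ∧ u ∈ S ∧
      (∀ k (hk : k ∈ M), (t k hk).IsPath ∧ (t k hk).length ≤ d ∧
        ∀ y ∈ (t k hk).support, y ∈ S) ∧
      (∀ k (hk : k ∈ M), ∀ k' (hk' : k' ∈ M), k ≠ k' →
        ∀ y, y ∈ (t k hk).support → y ∈ (t k' hk').support → y = u) := by
  classical
  set q' : ∀ k : ℕ, G.Walk c (x k) := fun k => (q k).bypass with hq'
  have hq'path : ∀ k, (q' k).IsPath := fun k => (q k).bypass_isPath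
  have hq'len : ∀ k, (q' k).length ≤ d := fun k =>
    le_trans ((q k).length_bypass_le) (hlen k)
  have hq'supp : ∀ k, ∀ y ∈ (q' k).support, y ∈ S := fun k y hy =>
    hsupp k y ((q k).support_bypass_subset hy)
  set f : ℕ → Finset V := fun k => (q' k).support.toFinset with hf
  have hfcard : ∀ k ∈ (Set.univ : Set ℕ), (f k).card ≤ d + 1 := by
    intro k _
    calc (f k).card ≤ (q' k).support.length := (q' k).support.toFinset_card_le
      _ = (q' k).length + 1 := (q' k).length_support
      _ ≤ d + 1 := by have := hq'len k; omega
  obtain ⟨Y, M1, hM1sub, hM1inf, hYsub, hpair⟩ :=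
    sunflower (d+1) Set.univ Set.infinite_univ f hfcard
  have hcY : c ∈ Y := by
    obtain ⟨k, hk⟩ := hM1inf.nonempty
    obtain ⟨k', hk'⟩ := (hM1inf.diff (Set.finite_singleton k)).nonempty
    have hne : k' ≠ k := fun hh => hk'.2 (by simp [hh])
    rw [← hpair k hk k' hk'.1 (Ne.symm hne)]
    refine Finset.mem_inter.2 ⟨?_, ?_⟩ <;>
      · simp only [hf, List.mem_toFinset]
        exact Walk.start_mem_support _
  have hcex : ∀ k, ∃ y ∈ (↑Y : Set V), y ∈ (q' k).support :=
    fun k => ⟨c, by simpa using hcY, (q' k).start_mem_support⟩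
  obtain ⟨u, hufib⟩ := exists_infinite_fiber' hM1inf
      (fun k => (lastIn (↑Y) (q' k)).1) Y.finite_toSet
      (fun k _ => lastIn_fst_mem (↑Y) (q' k) (hcex k))
  set M2 : Set ℕ := {k ∈ M1 | (lastIn (↑Y : Set V) (q' k)).1 = u} with hM2
  have hM2sub : M2 ⊆ M1 := fun k hk => hk.1
  refine ⟨u, M2, fun k hk => ((lastIn (↑Y) (q' k)).2).copy hk.2 rfl, hufib, ?_, ?_, ?_⟩
  · obtain ⟨k, hk⟩ := hufib.nonempty
    have hmem : (lastIn (↑Y : Set V) (q' k)).1 ∈ (q' k).support :=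
      lastIn_support_subset _ _ _ ((lastIn (↑Y) (q' k)).2.start_mem_support)
    rw [hk.2] at hmem
    exact hq'supp k u hmem
  · intro k hk
    refine ⟨?_, ?_, ?_⟩
    · rw [Walk.isPath_copy]
      exact lastIn_isPath _ _ (hq'path k)
    · rw [Walk.length_copy]
      exact le_trans (lastIn_length_le _ _) (hq'len k)
    · intro y hy
      rw [Walk.support_copy] at hy
      exact hq'supp k y (lastIn_support_subset _ _ y hy)
  · intro k hk k' hk' hne y hy hy'
    rw [Walk.support_copy] at hy hy'
    have h1 : y ∈ f k := List.mem_toFinset.2 (lastIn_support_subset _ _ y hy)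
    have h2 : y ∈ f k' := List.mem_toFinset.2 (lastIn_support_subset _ _ y hy')
    have hyY : y ∈ Y := by
      rw [← hpair k (hM2sub hk) k' (hM2sub hk') hne]
      exact Finset.mem_inter.2 ⟨h1, h2⟩
    have hres := lastIn_eq_of_mem (↑Y) (q' k) y hy (by simpa using hyY)
    rw [hk.2] at hres
    exact hres

end Helpers

/-- If some infinite clique is a shallow minor of `G` at depth `d`, then
`K_ω` is a topological shallow minor of `G` at depth `3d + 1`. -/
theorem infinite_clique_minor_to_top {V : Type} (G : SimpleGraph V) (d : ℕ)
    (h : ∃ (A : Type) (_ : Infinite A), IsShallowMinor G (⊤ : SimpleGraph A) d) :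
    IsTopShallowMinor G Komega (3 * d + 1) := by
  classical
  obtain ⟨A, hA, α, hrad, hdisj, hadj⟩ := h
  haveI := hA
  let ι : ℕ ⊕ ℕ × ℕ ↪ A :=
    (Denumerable.eqv (ℕ ⊕ ℕ × ℕ)).toEmbedding.trans (Infinite.natEmbedding A)
  let a : ℕ → A := fun i => ι (Sum.inl i)
  let μ : ℕ × ℕ → A := fun p => ι (Sum.inr p)
  have hane : ∀ i p, a i ≠ μ p := by
    intro i p hh
    simpa [a, μ] using ι.injective hh
  have hainj : Function.Injective a := by
    intro i j hh
    simpa [a] using ι.injective hh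
  have hμinj : Function.Injective μ := by
    intro p q hh
    simpa [μ] using ι.injective hh
  -- centers and walks to them, transported to `G`
  have hcen : ∀ w : A, ∃ c, c ∈ (α w).verts ∧ ∀ x, x ∈ (α w).verts →
      ∃ p : G.Walk c x, p.length ≤ d ∧ ∀ y ∈ p.support, y ∈ (α w).verts := by
    intro w
    obtain ⟨⟨c, hc⟩, hwalk⟩ := hrad w
    refine ⟨c, hc, ?_⟩
    intro x hx
    obtain ⟨p, hp⟩ := hwalk ⟨x, hx⟩
    refine ⟨p.map (α w).hom, ?_, ?_⟩
    · exact (SimpleGraph.Walk.length_map _ _).le.trans hp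
    · intro y hy
      replace hy : y ∈ (p.map (α w).hom).support := hy
      rw [SimpleGraph.Walk.support_map] at hy
      obtain ⟨⟨z, hz⟩, _, rfl⟩ := List.mem_map.1 hy
      exact hz
  choose cen hcenmem hcenwalk using hcen
  choose wk hwklen hwksupp using hcenwalk
  -- crossing a branch set between two of its vertices
  have cross : ∀ (w : A) (y z : V), y ∈ (α w).verts → z ∈ (α w).verts →
      ∃ p : G.Walk y z, p.length ≤ 2 * d ∧ ∀ v ∈ p.support, v ∈ (α w).verts := by
    intro w y z hy hz
    refine ⟨(wk w y hy).reverse.append (wk w z hz), ?_, ?_⟩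
    · rw [Walk.length_append, Walk.length_reverse]
      have h1 := hwklen w y hy
      have h2 := hwklen w z hz
      omega
    · intro v hv
      rcases (Walk.mem_support_append_iff _ _).1 hv with hv | hv
      · rw [Walk.support_reverse] at hv
        exact hwksupp w y hy v (List.mem_reverse.1 hv)
      · exact hwksupp w z hz v hv
  -- ports between the `a i` branch sets and the auxiliary branch sets
  have hport : ∀ i j : ℕ, ∃ xx, xx ∈ (α (a i)).verts ∧
      ∃ yy, yy ∈ (α (μ (i, j))).verts ∧ G.Adj xx yy := by
    intro i j
    obtain ⟨xx, hxx, yy, hyy, hxy⟩ := hadj (a i) (μ (i, j)) ((top_adj _ _).2 (hane i (i, j)))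
    exact ⟨xx, hxx, yy, hyy, hxy⟩
  choose px hpx py hpy hpadj using hport
  -- fans inside the `a i` branch sets
  have hfan : ∀ i : ℕ, ∃ (u : V) (M : Set ℕ) (t : ∀ k ∈ M, G.Walk u (px i k)),
      M.Infinite ∧ u ∈ (α (a i)).verts ∧
      (∀ k (hk : k ∈ M), (t k hk).IsPath ∧ (t k hk).length ≤ d ∧
        ∀ y ∈ (t k hk).support, y ∈ (α (a i)).verts) ∧
      (∀ k (hk : k ∈ M), ∀ k' (hk' : k' ∈ M), k ≠ k' →
        ∀ y, y ∈ (t k hk).support → y ∈ (t k' hk').support → y = u) := by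
    intro i
    exact fan (fun k => wk (a i) (px i k) (hpx i k))
      (fun k => hwklen (a i) (px i k) (hpx i k))
      (fun k => hwksupp (a i) (px i k) (hpx i k))
  choose u J t hJinf hu ht1 ht2 using hfan
  let φ : ℕ → ℕ → ℕ := fun i j => ↑(Set.Infinite.natEmbedding (J i) (hJinf i) j)
  have hφmem : ∀ i j, φ i j ∈ J i := fun i j =>
    (Set.Infinite.natEmbedding (J i) (hJinf i) j).2
  have hφinj : ∀ i, Function.Injective (φ i) := by
    intro i j j' hh
    have := (Set.Infinite.natEmbedding (J i) (hJinf i)).injective (Subtype.ext hh)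
    exact this
  have huinj : Function.Injective u := by
    intro i j hij
    by_contra hne
    have hd := hdisj (a i) (a j) (fun hh => hne (hainj hh))
    exact Set.disjoint_left.1 hd (hu i) (by rw [hij]; exact hu j)
  -- the connecting walks
  have hQ : ∀ i j : ℕ, i ≠ j → ∃ qq : G.Walk (u i) (u j), qq.IsPath ∧
      qq.length ≤ 2 * (3 * d + 1) + 1 ∧
      ∀ y ∈ qq.support,
        (y ∈ (t i (φ i j) (hφmem i j)).support ∨ y ∈ (α (μ (i, φ i j))).verts) ∨
        (y ∈ (t j (φ j i) (hφmem j i)).support ∨ y ∈ (α (μ (j, φ j i))).verts) := by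
    intro i j hij
    have hm12 : μ (i, φ i j) ≠ μ (j, φ j i) := by
      intro hh
      exact hij (congrArg Prod.fst (hμinj hh))
    obtain ⟨z1, hz1, z2, hz2, hzadj⟩ := hadj (μ (i, φ i j)) (μ (j, φ j i)) ((top_adj _ _).2 hm12)
    obtain ⟨c1, hc1len, hc1supp⟩ := cross (μ (i, φ i j)) (py i (φ i j)) z1 (hpy i (φ i j)) hz1
    obtain ⟨c2, hc2len, hc2supp⟩ := cross (μ (j, φ j i)) z2 (py j (φ j i)) hz2 (hpy j (φ j i))
    have l1 := (ht1 i (φ i j) (hφmem i j)).2.1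
    have l2 := (ht1 j (φ j i) (hφmem j i)).2.1
    refine ⟨((t i (φ i j) (hφmem i j)).append (Walk.cons (hpadj i (φ i j))
        (c1.append (Walk.cons hzadj (c2.append (Walk.cons (hpadj j (φ j i)).symm
          (t j (φ j i) (hφmem j i)).reverse)))))).bypass,
      Walk.bypass_isPath _, ?_, ?_⟩
    · refine le_trans (Walk.length_bypass_le _) ?_
      simp only [Walk.length_append, Walk.length_cons, Walk.length_reverse]
      omega
    · intro y hy
      have hy' := Walk.support_bypass_subset _ hy
      rcases (Walk.mem_support_append_iff _ _).1 hy' with hy1 | hy1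
      · exact Or.inl (Or.inl hy1)
      rw [Walk.support_cons] at hy1
      rcases List.mem_cons.1 hy1 with rfl | hy2
      · exact Or.inl (Or.inl (Walk.end_mem_support _))
      rcases (Walk.mem_support_append_iff _ _).1 hy2 with hy3 | hy3
      · exact Or.inl (Or.inr (hc1supp y hy3))
      rw [Walk.support_cons] at hy3
      rcases List.mem_cons.1 hy3 with rfl | hy4
      · exact Or.inl (Or.inr (hc1supp _ (Walk.end_mem_support _)))
      rcases (Walk.mem_support_append_iff _ _).1 hy4 with hy5 | hy5
      · exact Or.inr (Or.inr (hc2supp y hy5))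
      rw [Walk.support_cons] at hy5
      rcases List.mem_cons.1 hy5 with rfl | hy6
      · exact Or.inr (Or.inr (hpy j (φ j i)))
      rw [Walk.support_reverse] at hy6
      exact Or.inr (Or.inl (List.mem_reverse.1 hy6))
  choose Q hQpath hQlen hQsupp using hQ
  -- the crucial disjointness property of "sides"
  have hSide : ∀ (o p o2 p2 : ℕ), (o, p) ≠ (o2, p2) → ∀ y,
      (y ∈ (t o (φ o p) (hφmem o p)).support ∨ y ∈ (α (μ (o, φ o p))).verts) →
      (y ∈ (t o2 (φ o2 p2) (hφmem o2 p2)).support ∨ y ∈ (α (μ (o2, φ o2 p2))).verts) →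
      y = u o ∧ o = o2 := by
    intro o p o2 p2 hne y hy1 hy2
    have hts : ∀ oo pp, ∀ z ∈ (t oo (φ oo pp) (hφmem oo pp)).support, z ∈ (α (a oo)).verts :=
      fun oo pp z hz => (ht1 oo (φ oo pp) (hφmem oo pp)).2.2 z hz
    rcases hy1 with hy1 | hy1 <;> rcases hy2 with hy2 | hy2
    · by_cases ho : o = o2
      · subst ho
        have hpp : p ≠ p2 := fun hh => hne (by rw [hh])
        have hφne : φ o p ≠ φ o p2 := fun hh => hpp (hφinj o hh)
        exact ⟨ht2 o (φ o p) (hφmem o p) (φ o p2) (hφmem o p2) hφne y hy1 hy2, rfl⟩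
      · exact absurd (hts o2 p2 y hy2)
          (Set.disjoint_left.1 (hdisj (a o) (a o2) (fun hh => ho (hainj hh))) (hts o p y hy1))
    · exact absurd hy2
        (Set.disjoint_left.1 (hdisj (a o) (μ (o2, φ o2 p2)) (hane o _)) (hts o p y hy1))
    · exact absurd (hts o2 p2 y hy2)
        (Set.disjoint_left.1 (hdisj (μ (o, φ o p)) (a o2) (Ne.symm (hane o2 _))) hy1)
    · have hμne : μ (o, φ o p) ≠ μ (o2, φ o2 p2) := by
        intro hh
        have hpr := hμinj hh
        have ho : o = o2 := congrArg Prod.fst hpr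
        subst ho
        have hsnd : φ o p = φ o p2 := congrArg Prod.snd hpr
        exact hne (by rw [hφinj o hsnd])
      exact absurd hy2 (Set.disjoint_left.1 (hdisj _ _ hμne) hy1)
  -- disjointness of the connecting walks
  have hkey : ∀ (i j i2 j2 : ℕ) (hij : i ≠ j) (h2 : i2 ≠ j2), s(i, j) ≠ s(i2, j2) →
      ∀ y, y ∈ (Q i j hij).support → y ∈ (Q i2 j2 h2).support →
        (y = u i ∨ y = u j) ∧ (y = u i2 ∨ y = u j2) := by
    intro i j i2 j2 hij h2 hs y hy hy2
    have hA' := hQsupp i j hij y hy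
    have hB' := hQsupp i2 j2 h2 y hy2
    have e1 : (i, j) ≠ (i2, j2) := by
      intro hh
      simp only [Prod.mk.injEq] at hh
      obtain ⟨rfl, rfl⟩ := hh
      exact hs rfl
    have e2 : (i, j) ≠ (j2, i2) := by
      intro hh
      simp only [Prod.mk.injEq] at hh
      obtain ⟨rfl, rfl⟩ := hh
      exact hs (Sym2.eq_swap)
    have e3 : (j, i) ≠ (i2, j2) := by
      intro hh
      simp only [Prod.mk.injEq] at hh
      obtain ⟨rfl, rfl⟩ := hh
      exact hs (Sym2.eq_swap)
    have e4 : (j, i) ≠ (j2, i2) := by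
      intro hh
      simp only [Prod.mk.injEq] at hh
      obtain ⟨rfl, rfl⟩ := hh
      exact hs rfl
    rcases hA' with hA' | hA' <;> rcases hB' with hB' | hB'
    · obtain ⟨hy', ho⟩ := hSide i j i2 j2 e1 y hA' hB'
      exact ⟨Or.inl hy', Or.inl (by rw [← ho]; exact hy')⟩
    · obtain ⟨hy', ho⟩ := hSide i j j2 i2 e2 y hA' hB'
      exact ⟨Or.inl hy', Or.inr (by rw [← ho]; exact hy')⟩
    · obtain ⟨hy', ho⟩ := hSide j i i2 j2 e3 y hA' hB'
      exact ⟨Or.inr hy', Or.inl (by rw [← ho]; exact hy')⟩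
    · obtain ⟨hy', ho⟩ := hSide j i j2 i2 e4 y hA' hB'
      exact ⟨Or.inr hy', Or.inr (by rw [← ho]; exact hy')⟩
  -- assemble the topological minor model
  refine ⟨u, fun i j h' => if hlt : i < j then Q i j h'.ne else (Q j i h'.ne').reverse,
    huinj, ?_, ?_, ?_, ?_⟩
  · intro i j h'
    dsimp only
    split_ifs with hlt
    · exact hQpath i j h'.ne
    · exact (hQpath j i h'.ne').reverse
  · intro i j h'
    dsimp only
    split_ifs with hlt
    · exact hQlen i j h'.ne
    · rw [Walk.length_reverse]
      exact hQlen j i h'.ne'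
  · intro i j h'
    dsimp only
    by_cases hlt : i < j
    · have hlt' : ¬ j < i := by omega
      rw [dif_pos hlt, dif_neg hlt']
    · have hlt2 : j < i := by
        have := h'.ne
        omega
      rw [dif_neg hlt, dif_pos hlt2, Walk.reverse_reverse]
  · intro i j i2 j2 h' h2' hs y hy hy2
    dsimp only at hy hy2
    have conv1 : ∀ (ii jj : ℕ) (hh : Komega.Adj ii jj),
        y ∈ (if hlt : ii < jj then Q ii jj hh.ne else (Q jj ii hh.ne').reverse).support →
        (y ∈ (Q ii jj hh.ne).support ∧ ii < jj) ∨
        (y ∈ (Q jj ii hh.ne').support ∧ ¬ ii < jj) := by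
      intro ii jj hh hmem
      split_ifs at hmem with hlt
      · exact Or.inl ⟨hmem, hlt⟩
      · rw [Walk.support_reverse] at hmem
        exact Or.inr ⟨List.mem_reverse.1 hmem, hlt⟩
    have hs1 : s(i, j) ≠ s(i2, j2) := hs
    have hs2 : s(j, i) ≠ s(i2, j2) := by rw [Sym2.eq_swap]; exact hs
    have hs3 : s(i, j) ≠ s(j2, i2) := by
      rw [show s(j2, i2) = s(i2, j2) from Sym2.eq_swap]; exact hs
    have hs4 : s(j, i) ≠ s(j2, i2) := by
      rw [Sym2.eq_swap, show s(j2, i2) = s(i2, j2) from Sym2.eq_swap]; exact hs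
    rcases conv1 i j h' hy with ⟨hy', _⟩ | ⟨hy', _⟩ <;>
      rcases conv1 i2 j2 h2' hy2 with ⟨hy2', _⟩ | ⟨hy2', _⟩
    · have := hkey i j i2 j2 h'.ne h2'.ne hs1 y hy' hy2'
      tauto
    · have := hkey i j j2 i2 h'.ne h2'.ne' hs3 y hy' hy2'
      tauto
    · have := hkey j i i2 j2 h'.ne' h2'.ne hs2 y hy' hy2'
      tauto
    · have := hkey j i j2 i2 h'.ne' h2'.ne' hs4 y hy' hy2'
      tauto


end NWD
end
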